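/- (Positive semidefiniteness in the proof of Lemma S1.) Let X and W be square-integrable ℝᵖ-valued random vectors such that E[XWᵀ] and E[WWᵀ] are invertible p×p matrices. Then the matrix E[XWᵀ]⁻¹ · E[XXᵀ] · E[WXᵀ]⁻¹ − E[WWᵀ]⁻¹ is positive semidefinite. -/

import Mathlib

open MeasureTheory Matrix

section Aux

variable {Ω : Type*} [MeasurableSpace Ω] {P : Measure Ω} {p : ℕ}

lemma aux_integrable_mul {f g : Ω → ℝ} (hf : MemLp f 2 P) (hg : MemLp g 2 P) :
    Integrable (fun ω => f ω * g ω) P := by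
  have h := (((hf.add hg).integrable_sq).sub hf.integrable_sq).sub hg.integrable_sq
  have heq : (fun ω => f ω * g ω)
      = fun ω => (((f ω + g ω) ^ 2 - f ω ^ 2) - g ω ^ 2) / 2 := by ext ω; ring
  rw [heq]
  exact h.div_const 2

lemma aux_memLp_sum (a : Fin p → ℝ) (f : Ω → Fin p → ℝ)
    (hf : ∀ i, MemLp (fun ω => f ω i) 2 P) :
    MemLp (fun ω => ∑ i, a i * f ω i) 2 P := by
  have h := memLp_finset_sum' (μ := P) (p := 2) Finset.univ
    (fun i (_ : i ∈ Finset.univ) => (hf i).const_mul (a i))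
  have e : (∑ i : Fin p, fun ω => a i * f ω i) = fun ω => ∑ i, a i * f ω i := by
    ext ω; simp
  rw [e] at h
  exact h

lemma aux_int_bilin (f g : Ω → Fin p → ℝ)
    (hf : ∀ i, MemLp (fun ω => f ω i) 2 P) (hg : ∀ i, MemLp (fun ω => g ω i) 2 P)
    (a b : Fin p → ℝ) :
    ∫ ω, (∑ i, a i * f ω i) * (∑ j, b j * g ω j) ∂P
      = a ⬝ᵥ (Matrix.of fun i j => ∫ ω, f ω i * g ω j ∂P) *ᵥ b := by
  have heq : ∀ ω, (∑ i, a i * f ω i) * (∑ j, b j * g ω j)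
      = ∑ i, ∑ j, a i * b j * (f ω i * g ω j) := by
    intro ω
    rw [Finset.sum_mul_sum]
    exact Finset.sum_congr rfl fun i _ => Finset.sum_congr rfl fun j _ => by ring
  simp_rw [heq]
  rw [integral_finset_sum _ (fun i _ => integrable_finset_sum _ (fun j _ =>
    ((aux_integrable_mul (hf i) (hg j)).const_mul _)))]
  simp_rw [integral_finset_sum _ (fun j (_ : j ∈ Finset.univ) =>
    ((aux_integrable_mul (hf _) (hg j)).const_mul _)), integral_const_mul]
  simp only [dotProduct, Matrix.mulVec, Matrix.of_apply, Finset.mul_sum]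
  exact Finset.sum_congr rfl fun i _ => Finset.sum_congr rfl fun j _ => by ring

lemma aux_quad (A M B : Matrix (Fin p) (Fin p) ℝ) (u v : Fin p → ℝ) :
    (Aᵀ *ᵥ u) ⬝ᵥ M *ᵥ (B *ᵥ v) = u ⬝ᵥ (A * M * B) *ᵥ v := by
  rw [Matrix.mulVec_transpose, Matrix.mulVec_mulVec, Matrix.dotProduct_mulVec,
    Matrix.vecMul_vecMul, Matrix.dotProduct_mulVec, Matrix.mul_assoc]

lemma aux_key (S T : Ω → ℝ) (hS : MemLp S 2 P) (hT : MemLp T 2 P) :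
    0 ≤ (∫ ω, S ω * S ω ∂P) - 2 * (∫ ω, S ω * T ω ∂P) + (∫ ω, T ω * T ω ∂P) := by
  have h1 := aux_integrable_mul hS hS
  have h2 := aux_integrable_mul hS hT
  have h3 := aux_integrable_mul hT hT
  have h0 : 0 ≤ ∫ ω, (S ω - T ω) ^ 2 ∂P := integral_nonneg fun ω => sq_nonneg _
  have h12 : Integrable (fun ω => S ω * S ω - 2 * (S ω * T ω)) P :=
    h1.sub (h2.const_mul 2)
  have e : ∫ ω, (S ω - T ω) ^ 2 ∂P
      = ∫ ω, ((S ω * S ω - 2 * (S ω * T ω)) + T ω * T ω) ∂P := by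
    congr 1; ext ω; ring
  rw [e, integral_add h12 h3, integral_sub h1 (h2.const_mul 2), integral_const_mul] at h0
  linarith

end Aux

/-- Positive semidefiniteness in the proof of Lemma S1. For
square-integrable random vectors `X, W` with `E[XWᵀ]` and `E[WWᵀ]` invertible, the matrix
`E[XWᵀ]⁻¹ E[XXᵀ] E[WXᵀ]⁻¹ − E[WWᵀ]⁻¹` is positive semidefinite. -/
theorem lemma_S1_posSemidef
    {Ω : Type*} [MeasurableSpace Ω] {P : Measure Ω} [IsProbabilityMeasure P]
    (p : ℕ)
    (X W : Ω → Fin p → ℝ) (hX : Measurable X) (hW : Measurable W)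
    (hX2 : ∀ i, MemLp (fun ω => X ω i) 2 P)
    (hW2 : ∀ i, MemLp (fun ω => W ω i) 2 P)
    (EXW EXX EWX EWW : Matrix (Fin p) (Fin p) ℝ)
    (hEXW : EXW = Matrix.of fun i j => ∫ ω, X ω i * W ω j ∂P)
    (hEXX : EXX = Matrix.of fun i j => ∫ ω, X ω i * X ω j ∂P)
    (hEWX : EWX = Matrix.of fun i j => ∫ ω, W ω i * X ω j ∂P)
    (hEWW : EWW = Matrix.of fun i j => ∫ ω, W ω i * W ω j ∂P)
    (hinvXW : IsUnit EXW.det) (hinvWW : IsUnit EWW.det) :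
    (EXW⁻¹ * EXX * EWX⁻¹ - EWW⁻¹).PosSemidef := by
  have hXXsym : EXXᵀ = EXX := by
    subst hEXX; ext i j; simp [Matrix.transpose, mul_comm]
  have hWWsym : EWWᵀ = EWW := by
    subst hEWW; ext i j; simp [Matrix.transpose, mul_comm]
  have hWXt : EWX = EXWᵀ := by
    subst hEXW hEWX; ext i j; simp [Matrix.transpose, mul_comm]
  have hWWinvsym : EWW⁻¹ᵀ = EWW⁻¹ := by
    rw [Matrix.transpose_nonsing_inv, hWWsym]
  have hWXinv : EWX⁻¹ = EXW⁻¹ᵀ := by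
    rw [hWXt, ← Matrix.transpose_nonsing_inv]
  rw [Matrix.posSemidef_iff_dotProduct_mulVec]
  constructor
  · -- Hermitian
    rw [Matrix.IsHermitian, Matrix.conjTranspose_eq_transpose_of_trivial, hWXinv,
      Matrix.transpose_sub, hWWinvsym, Matrix.transpose_mul, Matrix.transpose_mul,
      Matrix.transpose_transpose, hXXsym, Matrix.mul_assoc]
  · intro v
    have ha : star v ⬝ᵥ (EXW⁻¹ * EXX * EWX⁻¹ - EWW⁻¹) *ᵥ v
        = v ⬝ᵥ (EXW⁻¹ * EXX * EWX⁻¹) *ᵥ v - v ⬝ᵥ EWW⁻¹ *ᵥ v := by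
      simp [Matrix.sub_mulVec, dotProduct_sub]
    rw [ha]
    set a : Fin p → ℝ := EXW⁻¹ᵀ *ᵥ v with ha'
    set b : Fin p → ℝ := EWW⁻¹ *ᵥ v with hb'
    have hXX : ∫ ω, (∑ i, a i * X ω i) * (∑ j, a j * X ω j) ∂P
        = v ⬝ᵥ (EXW⁻¹ * EXX * EWX⁻¹) *ᵥ v := by
      rw [aux_int_bilin X X hX2 hX2, ← hEXX, ha', hWXinv, aux_quad]
    have hXWb : ∫ ω, (∑ i, a i * X ω i) * (∑ j, b j * W ω j) ∂P
        = v ⬝ᵥ EWW⁻¹ *ᵥ v := by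
      rw [aux_int_bilin X W hX2 hW2, ← hEXW, ha', hb', aux_quad,
        Matrix.nonsing_inv_mul _ hinvXW, Matrix.one_mul]
    have hWWb : ∫ ω, (∑ i, b i * W ω i) * (∑ j, b j * W ω j) ∂P
        = v ⬝ᵥ EWW⁻¹ *ᵥ v := by
      rw [aux_int_bilin W W hW2 hW2, ← hEWW, hb']
      rw [show (EWW⁻¹ *ᵥ v) ⬝ᵥ EWW *ᵥ (EWW⁻¹ *ᵥ v)
          = (EWW⁻¹ᵀ *ᵥ v) ⬝ᵥ EWW *ᵥ (EWW⁻¹ *ᵥ v) from by rw [hWWinvsym]]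
      rw [aux_quad, Matrix.nonsing_inv_mul _ hinvWW, Matrix.one_mul]
    have hkey := aux_key (fun ω => ∑ i, a i * X ω i) (fun ω => ∑ j, b j * W ω j)
      (aux_memLp_sum a X hX2) (aux_memLp_sum b W hW2)
    simp only [hXX, hXWb, hWWb] at hkey
    linarith
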